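/- Assume the parameter conditions (PC). Then for all natural numbers p, k with 1 ≤ p ≤ k, and all x ∈ X, y ∈ Y: (1/(2τ_p))‖x − x^p‖² + (1/(2σ_p))‖y − y^p‖² ≥ ∑_{i=p}^{k} ( f(x^{i+1}, y) − f(x, y^{i+1}) ) + (1/(2τ_{k+1}))‖x − x^{k+1}‖² + (1/(2σ_{k+1}) − ‖K‖²·τ_k/2)‖y − y^{k+1}‖² − ∑_{i=p}^{k−1} (‖K‖ − 1/(2τ_i))‖x^i − x^{i+1}‖² − ∑_{i=p}^{k} (‖K‖ − 1/(2σ_i))‖y^i − y^{i+1}‖² − ‖K‖·‖x^{p−1} − x^p‖² − |⟪K(x^p − x^{p−1}), y^p − y⟫|. -/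
import Mathlib


open RealInnerProductSpace

private lemma young_aux {E : Type*} {F : Type*} [NormedAddCommGroup E] [InnerProductSpace ℝ E]
    [NormedAddCommGroup F] [InnerProductSpace ℝ F]
    (K : E →L[ℝ] F) (c : ℝ) (u : E) (v : F) :
    c * ⟪K u, v⟫ ≤ ‖K‖ * ‖u‖^2/2 + ‖K‖ * c^2 * ‖v‖^2/2 := by
  have h1 : |⟪K u, v⟫| ≤ ‖K u‖ * ‖v‖ := abs_real_inner_le_norm _ _
  have h2 : ‖K u‖ ≤ ‖K‖ * ‖u‖ := K.le_opNorm u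
  have h3 : c * ⟪K u, v⟫ ≤ |c| * (‖K‖ * ‖u‖ * ‖v‖) := by
    calc c * ⟪K u, v⟫ ≤ |c * ⟪K u, v⟫| := le_abs_self _
      _ = |c| * |⟪K u, v⟫| := abs_mul _ _
      _ ≤ |c| * (‖K u‖ * ‖v‖) := mul_le_mul_of_nonneg_left h1 (abs_nonneg c)
      _ ≤ |c| * (‖K‖ * ‖u‖ * ‖v‖) := by
          have h4 := mul_le_mul_of_nonneg_right h2 (norm_nonneg v)
          nlinarith [abs_nonneg c]
  have h4 : ‖K‖ * |c|^2 * ‖v‖^2 = ‖K‖ * c^2 * ‖v‖^2 := by rw [sq_abs]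
  have h5 : 0 ≤ ‖K‖ * (‖u‖ - |c| * ‖v‖)^2 := mul_nonneg (norm_nonneg _) (sq_nonneg _)
  nlinarith [h3, h4, h5]

private lemma young_aux2 {E : Type*} {F : Type*} [NormedAddCommGroup E] [InnerProductSpace ℝ E]
    [NormedAddCommGroup F] [InnerProductSpace ℝ F]
    (K : E →L[ℝ] F) (u : E) (v : F) (t : ℝ) (ht : 0 < t) :
    ⟪K u, v⟫ ≤ ‖u‖^2/(2*t) + ‖K‖^2 * t * ‖v‖^2/2 := by
  have h1 : ⟪K u, v⟫ ≤ ‖K u‖ * ‖v‖ := real_inner_le_norm _ _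
  have h2 : ‖K u‖ ≤ ‖K‖ * ‖u‖ := K.le_opNorm u
  have h3 : ⟪K u, v⟫ ≤ ‖K‖ * ‖u‖ * ‖v‖ :=
    h1.trans (mul_le_mul_of_nonneg_right h2 (norm_nonneg v))
  have ht' : t ≠ 0 := ht.ne'
  have expand : ‖u‖^2/(2*t) + ‖K‖^2 * t * ‖v‖^2/2 - ‖K‖ * ‖u‖ * ‖v‖
      = (‖u‖ - t * ‖K‖ * ‖v‖)^2/(2*t) := by
    field_simp
    ring
  have h5 : 0 ≤ (‖u‖ - t * ‖K‖ * ‖v‖)^2/(2*t) := by positivity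
  linarith

private lemma young_aux' {E : Type*} {F : Type*} [NormedAddCommGroup E] [InnerProductSpace ℝ E]
    [NormedAddCommGroup F] [InnerProductSpace ℝ F]
    (K : E →L[ℝ] F) (c : ℝ) (u : E) (v : F) :
    c * ⟪K u, v⟫ ≤ ‖K‖ * c^2 * ‖u‖^2/2 + ‖K‖ * ‖v‖^2/2 := by
  have h1 : |⟪K u, v⟫| ≤ ‖K u‖ * ‖v‖ := abs_real_inner_le_norm _ _
  have h2 : ‖K u‖ ≤ ‖K‖ * ‖u‖ := K.le_opNorm u
  have h3 : c * ⟪K u, v⟫ ≤ |c| * (‖K‖ * ‖u‖ * ‖v‖) := by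
    calc c * ⟪K u, v⟫ ≤ |c * ⟪K u, v⟫| := le_abs_self _
      _ = |c| * |⟪K u, v⟫| := abs_mul _ _
      _ ≤ |c| * (‖K u‖ * ‖v‖) := mul_le_mul_of_nonneg_left h1 (abs_nonneg c)
      _ ≤ |c| * (‖K‖ * ‖u‖ * ‖v‖) := by
          have h4 := mul_le_mul_of_nonneg_right h2 (norm_nonneg v)
          nlinarith [abs_nonneg c]
  have h4 : ‖K‖ * |c|^2 * ‖u‖^2 = ‖K‖ * c^2 * ‖u‖^2 := by rw [sq_abs]
  have h5 : 0 ≤ ‖K‖ * (|c| * ‖u‖ - ‖v‖)^2 := mul_nonneg (norm_nonneg _) (sq_nonneg _)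
  nlinarith [h3, h4, h5]

/-- Corollary 4.10: key estimate under the parameter conditions (PC).  Here `αs i` models
the shifted family `α_{i-1}`, so the extrapolation update for `x̄^{k+1}` uses
`αs (k+1) = α_k`, and (PC) reads `‖K‖·(1 − αs i)² = 1/σ_i − 1/σ_{i+1}`. -/
theorem stmt_14
    {H₁ : Type*} [NormedAddCommGroup H₁] [InnerProductSpace ℝ H₁] [CompleteSpace H₁]
    {H₂ : Type*} [NormedAddCommGroup H₂] [InnerProductSpace ℝ H₂] [CompleteSpace H₂]
    (X : Set H₁) (Y : Set H₂)
    (hXne : X.Nonempty) (hXcl : IsClosed X) (hXcv : Convex ℝ X)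
    (hYne : Y.Nonempty) (hYcl : IsClosed Y) (hYcv : Convex ℝ Y)
    (K : H₁ →L[ℝ] H₂) (g : H₁ → ℝ) (h : H₂ → ℝ)
    (hg : ConvexOn ℝ Set.univ g) (hglsc : LowerSemicontinuous g)
    (hh : ConvexOn ℝ Set.univ h) (hhlsc : LowerSemicontinuous h)
    (f : H₁ → H₂ → ℝ)
    (hf : ∀ x y, f x y = ⟪K x, y⟫ + g x - h y)
    (xs : ℕ → H₁) (ys : ℕ → H₂) (hxX : ∀ k, xs k ∈ X) (hyY : ∀ k, ys k ∈ Y)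
    (τs σs : ℕ → ℝ) (hτ : ∀ k, 0 < τs k) (hσ : ∀ k, 0 < σs k)
    (αs βs : ℕ → ℝ) (hα : ∀ k, 0 ≤ αs k) (hβ : ∀ k, 0 ≤ βs k)
    (xbs : ℕ → H₁) (ybs : ℕ → H₂)
    (hxb0 : xbs 0 = xs 0)
    (hxbS : ∀ k, xbs (k+1) = xs (k+1) + αs (k+1) • (xs (k+1) - xs k))
    (hyb0 : ybs 0 = ys 0)
    (hybS : ∀ k, ybs (k+1) = ys (k+1) + βs k • (ys (k+1) - ys k))
    (hiterx : ∀ k, ∀ x ∈ X,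
      ⟪(τs k)⁻¹ • (xs k - xs (k+1)) - (ContinuousLinearMap.adjoint K) (ybs (k+1)),
        x - xs (k+1)⟫ + g (xs (k+1)) ≤ g x)
    (hitery : ∀ k, ∀ y ∈ Y,
      ⟪(σs k)⁻¹ • (ys k - ys (k+1)) + K (xbs k), y - ys (k+1)⟫ + h (ys (k+1)) ≤ h y)
    (hPCβ : ∀ i, ‖K‖ * (βs i)^2 = 1/(τs i) - 1/(τs (i+1)))
    (hPCα : ∀ i, ‖K‖ * (1 - αs i)^2 = 1/(σs i) - 1/(σs (i+1)))
    (p k : ℕ) (hp : 1 ≤ p) (hpk : p ≤ k)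
    (x : H₁) (hx : x ∈ X) (y : H₂) (hy : y ∈ Y) :
    ∑ i ∈ Finset.Icc p k, (f (xs (i+1)) y - f x (ys (i+1)))
      + (1/(2*τs (k+1))) * ‖x - xs (k+1)‖^2
      + (1/(2*σs (k+1)) - ‖K‖^2 * τs k / 2) * ‖y - ys (k+1)‖^2
      - ∑ i ∈ Finset.Icc p (k-1), (‖K‖ - 1/(2*τs i)) * ‖xs i - xs (i+1)‖^2
      - ∑ i ∈ Finset.Icc p k, (‖K‖ - 1/(2*σs i)) * ‖ys i - ys (i+1)‖^2
      - ‖K‖ * ‖xs (p-1) - xs p‖^2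
      - |⟪K (xs p - xs (p-1)), ys p - y⟫|
    ≤ (1/(2*τs p)) * ‖x - xs p‖^2 + (1/(2*σs p)) * ‖y - ys p‖^2 := by
  have hcomm : ∀ (u : H₁) (v : H₂), ⟪v, K u⟫ = ⟪K u, v⟫ := fun u v => real_inner_comm (K u) v
  -- The one-step estimate, at step i = j+1.
  have step : ∀ j : ℕ,
      (f (xs (j+2)) y - f x (ys (j+2)))
      + (‖xs (j+1) - xs (j+2)‖^2/(2*τs (j+1)) + ‖ys (j+1) - ys (j+2)‖^2/(2*σs (j+1)))
      + ‖x - xs (j+2)‖^2/(2*τs (j+2)) + ‖y - ys (j+2)‖^2/(2*σs (j+2))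
      ≤ ‖x - xs (j+1)‖^2/(2*τs (j+1)) + ‖y - ys (j+1)‖^2/(2*σs (j+1))
        + ⟪K (xs (j+2) - xs (j+1)), y - ys (j+2)⟫ - ⟪K (xs (j+1) - xs j), y - ys (j+1)⟫
        + ‖K‖ * (‖xs j - xs (j+1)‖^2 + ‖ys (j+1) - ys (j+2)‖^2) := by
    intro j
    have h1 := hiterx (j+1) x hx
    have h2 := hitery (j+1) y hy
    rw [hybS (j+1)] at h1
    rw [hxbS j] at h2
    simp only [show j+1+1 = j+2 from by omega] at h1 h2
    have hA : ⟪xs (j+1) - xs (j+2), x - xs (j+2)⟫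
        = (‖x - xs (j+2)‖^2 + ‖xs (j+1) - xs (j+2)‖^2 - ‖x - xs (j+1)‖^2)/2 := by
      have hid := @norm_sub_sq_real H₁ _ _ (x - xs (j+2)) (xs (j+1) - xs (j+2))
      have h2' : (x - xs (j+2)) - (xs (j+1) - xs (j+2)) = x - xs (j+1) := by abel
      rw [h2'] at hid
      rw [real_inner_comm]
      linarith
    have hB : ⟪ys (j+1) - ys (j+2), y - ys (j+2)⟫
        = (‖y - ys (j+2)‖^2 + ‖ys (j+1) - ys (j+2)‖^2 - ‖y - ys (j+1)‖^2)/2 := by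
      have hid := @norm_sub_sq_real H₂ _ _ (y - ys (j+2)) (ys (j+1) - ys (j+2))
      have h2' : (y - ys (j+2)) - (ys (j+1) - ys (j+2)) = y - ys (j+1) := by abel
      rw [h2'] at hid
      rw [real_inner_comm]
      linarith
    have hA' : (τs (j+1))⁻¹ * ⟪xs (j+1) - xs (j+2), x - xs (j+2)⟫
        = (τs (j+1))⁻¹ * ((‖x - xs (j+2)‖^2 + ‖xs (j+1) - xs (j+2)‖^2 - ‖x - xs (j+1)‖^2)/2) := by
      rw [hA]
    have hB' : (σs (j+1))⁻¹ * ⟪ys (j+1) - ys (j+2), y - ys (j+2)⟫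
        = (σs (j+1))⁻¹ * ((‖y - ys (j+2)‖^2 + ‖ys (j+1) - ys (j+2)‖^2 - ‖y - ys (j+1)‖^2)/2) := by
      rw [hB]
    have hY1 := young_aux K (1 - αs (j+1)) (xs (j+1) - xs j) (y - ys (j+2))
    rw [norm_sub_rev (xs (j+1)) (xs j)] at hY1
    have hY2 := young_aux K 1 (xs (j+1) - xs j) (ys (j+2) - ys (j+1))
    rw [norm_sub_rev (xs (j+1)) (xs j), norm_sub_rev (ys (j+2)) (ys (j+1))] at hY2
    have hY3 := young_aux' K (βs (j+1)) (x - xs (j+2)) (ys (j+2) - ys (j+1))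
    rw [norm_sub_rev (ys (j+2)) (ys (j+1))] at hY3
    have hPC1' : ‖K‖ * (βs (j+1))^2 * ‖x - xs (j+2)‖^2
        = (1/(τs (j+1)) - 1/(τs (j+2))) * ‖x - xs (j+2)‖^2 := by rw [hPCβ (j+1)]
    have hPC2' : ‖K‖ * (1 - αs (j+1))^2 * ‖y - ys (j+2)‖^2
        = (1/(σs (j+1)) - 1/(σs (j+2))) * ‖y - ys (j+2)‖^2 := by rw [hPCα (j+1)]
    rw [hf, hf]
    simp only [map_sub, map_add, map_smul, inner_sub_left, inner_sub_right, inner_add_left,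
      inner_add_right, real_inner_smul_left, real_inner_smul_right,
      ContinuousLinearMap.adjoint_inner_left, hcomm] at h1 h2 hA' hB' hY1 hY2 hY3 ⊢
    simp only [div_eq_mul_inv, mul_inv, one_div] at h1 h2 hA' hB' hY1 hY2 hY3 hPC1' hPC2' ⊢
    linarith [h1, h2, hA', hB', hY1, hY2, hY3, hPC1', hPC2']
  obtain ⟨q, rfl⟩ : ∃ q, p = q + 1 := ⟨p - 1, (Nat.succ_pred_eq_of_pos hp).symm⟩
  -- aggregated estimate
  have Q : ∀ m, q + 1 ≤ m →
      (∑ i ∈ Finset.Icc (q+1) m, (f (xs (i+1)) y - f x (ys (i+1))))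
      + (∑ i ∈ Finset.Icc (q+1) m,
          (‖xs i - xs (i+1)‖^2/(2*τs i) + ‖ys i - ys (i+1)‖^2/(2*σs i)))
      + ‖x - xs (m+1)‖^2/(2*τs (m+1)) + ‖y - ys (m+1)‖^2/(2*σs (m+1))
      ≤ ‖x - xs (q+1)‖^2/(2*τs (q+1)) + ‖y - ys (q+1)‖^2/(2*σs (q+1))
        + ⟪K (xs (m+1) - xs m), y - ys (m+1)⟫ - ⟪K (xs (q+1) - xs q), y - ys (q+1)⟫
        + ‖K‖ * (‖xs q - xs (q+1)‖^2
            + (∑ i ∈ Finset.Icc (q+1) (m-1), ‖xs i - xs (i+1)‖^2)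
            + (∑ i ∈ Finset.Icc (q+1) m, ‖ys i - ys (i+1)‖^2)) := by
    intro m hm
    induction m, hm using Nat.le_induction with
    | base =>
        simp only [Nat.add_sub_cancel, Finset.Icc_self, Finset.sum_singleton,
          Finset.Icc_eq_empty_of_lt (Nat.lt_succ_self q), Finset.sum_empty]
        have hst := step q
        simp only [div_eq_mul_inv, mul_inv, one_div] at hst ⊢
        linarith [hst]
    | succ n hn ih =>
        obtain ⟨t, rfl⟩ : ∃ t, n = t + 1 := ⟨n - 1, by omega⟩
        simp only [Nat.add_sub_cancel, show t + 2 - 1 = t + 1 from by omega] at ih ⊢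
        rw [Finset.sum_Icc_succ_top (by omega : q + 1 ≤ t + 1)
              (fun i => ‖xs i - xs (i+1)‖^2),
          Finset.sum_Icc_succ_top (by omega : q + 1 ≤ t + 2)
              (fun i => f (xs (i+1)) y - f x (ys (i+1))),
          Finset.sum_Icc_succ_top (by omega : q + 1 ≤ t + 2)
              (fun i => ‖xs i - xs (i+1)‖^2/(2*τs i) + ‖ys i - ys (i+1)‖^2/(2*σs i)),
          Finset.sum_Icc_succ_top (by omega : q + 1 ≤ t + 2)
              (fun i => ‖ys i - ys (i+1)‖^2)]
        have hst := step (t + 1)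
        simp only [div_eq_mul_inv, mul_inv, one_div] at hst ih ⊢
        linarith [hst, ih]
  obtain ⟨r, rfl⟩ : ∃ r, k = r + 1 := ⟨k - 1, by omega⟩
  simp only [Nat.add_sub_cancel]
  have hQ := Q (r+1) hpk
  simp only [Nat.add_sub_cancel] at hQ
  -- bound on the final cross term
  have hUk : ⟪K (xs (r+2) - xs (r+1)), y - ys (r+2)⟫
      ≤ ‖xs (r+1) - xs (r+2)‖^2/(2*τs (r+1)) + ‖K‖^2 * τs (r+1) * ‖y - ys (r+2)‖^2/2 := by
    have := young_aux2 K (xs (r+2) - xs (r+1)) (y - ys (r+2)) (τs (r+1)) (hτ (r+1))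
    rw [norm_sub_rev (xs (r+2)) (xs (r+1))] at this
    exact this
  -- bound on the initial cross term
  have hUp : -⟪K (xs (q+1) - xs q), y - ys (q+1)⟫
      ≤ |⟪K (xs (q+1) - xs q), ys (q+1) - y⟫| := by
    have hneg : ⟪K (xs (q+1) - xs q), ys (q+1) - y⟫
        = -⟪K (xs (q+1) - xs q), y - ys (q+1)⟫ := by
      rw [← inner_neg_right]
      congr 1
      abel
    rw [← hneg]
    exact le_abs_self _
  have hS1 : ∑ i ∈ Finset.Icc (q+1) r, (‖K‖ - 1/(2*τs i)) * ‖xs i - xs (i+1)‖^2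
      = ‖K‖ * (∑ i ∈ Finset.Icc (q+1) r, ‖xs i - xs (i+1)‖^2)
        - ∑ i ∈ Finset.Icc (q+1) r, ‖xs i - xs (i+1)‖^2/(2*τs i) := by
    rw [Finset.mul_sum, ← Finset.sum_sub_distrib]
    exact Finset.sum_congr rfl (fun i _ => by ring)
  have hS2 : ∑ i ∈ Finset.Icc (q+1) (r+1), (‖K‖ - 1/(2*σs i)) * ‖ys i - ys (i+1)‖^2
      = ‖K‖ * (∑ i ∈ Finset.Icc (q+1) (r+1), ‖ys i - ys (i+1)‖^2)
        - ∑ i ∈ Finset.Icc (q+1) (r+1), ‖ys i - ys (i+1)‖^2/(2*σs i) := by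
    rw [Finset.mul_sum, ← Finset.sum_sub_distrib]
    exact Finset.sum_congr rfl (fun i _ => by ring)
  have hS3 : ∑ i ∈ Finset.Icc (q+1) (r+1),
      (‖xs i - xs (i+1)‖^2/(2*τs i) + ‖ys i - ys (i+1)‖^2/(2*σs i))
      = (∑ i ∈ Finset.Icc (q+1) r, ‖xs i - xs (i+1)‖^2/(2*τs i))
        + ‖xs (r+1) - xs (r+2)‖^2/(2*τs (r+1))
        + ∑ i ∈ Finset.Icc (q+1) (r+1), ‖ys i - ys (i+1)‖^2/(2*σs i) := by
    rw [Finset.sum_add_distrib, Finset.sum_Icc_succ_top hpk]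
  simp only [div_eq_mul_inv, mul_inv, one_div] at hQ hUk hUp hS1 hS2 hS3 ⊢
  linarith [hQ, hUk, hUp, hS1, hS2, hS3]
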